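/- Let G be a graph with χ(KG(G)) = cd₂(G). Consider an optimal proper coloring of KG(G), i.e., a partition of E(G) into triangles and stars using χ(KG(G)) classes, chosen with a minimum number of triangle classes. Then every circuit (cycle) of G is either one of the triangle classes or contains at least one edge belonging to a star class. -/

import Mathlib

open Finset

/-- `cd₂(G)` for a graph: the minimum number of vertices whose deletion leaves
an induced bipartite subgraph. -/
noncomputable def cd2Graph {V : Type*} [Fintype V] [DecidableEq V] (G : SimpleGraph V) : ℕ :=
  sInf {k | ∃ U : Finset V, U.card = k ∧ ∃ c : V → Bool,
    ∀ u v : V, G.Adj u v → u ∉ U → v ∉ U → c u ≠ c v}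

/-- The independence number `α(G)`: the maximum size of an independent set. -/
noncomputable def indepNum {V : Type*} [Fintype V] [DecidableEq V] (G : SimpleGraph V) : ℕ :=
  sSup {k | ∃ S : Finset V, S.card = k ∧ ∀ u ∈ S, ∀ v ∈ S, ¬ G.Adj u v}
/-- The Kneser graph of a graph `G` viewed as a 2-uniform hypergraph: vertices
are the edges of `G`, two being adjacent iff they share no endpoint. -/
def KGgraph {V : Type*} [Fintype V] [DecidableEq V] (G : SimpleGraph V)
    [DecidableRel G.Adj] : SimpleGraph {e : Sym2 V // e ∈ G.edgeFinset} where
  Adj a b := ∀ v : V, ¬(v ∈ (a : Sym2 V) ∧ v ∈ (b : Sym2 V))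
  symm := by
    constructor
    intro a b h v hv
    exact h v ⟨hv.2, hv.1⟩
  loopless := by
    constructor
    intro a h
    exact h ((a : Sym2 V)).out.1 ⟨Sym2.out_fst_mem _, Sym2.out_fst_mem _⟩

/-- A proper coloring of `KG(G)` given by `c` on `Sym2 V`: disjoint edges of `G`
receive distinct colors. -/
def ProperKGColoring {V : Type*} [Fintype V] [DecidableEq V] (G : SimpleGraph V)
    [DecidableRel G.Adj] {N : ℕ} (c : Sym2 V → Fin N) : Prop :=
  ∀ e ∈ G.edgeFinset, ∀ f ∈ G.edgeFinset,
    (∀ v : V, ¬(v ∈ e ∧ v ∈ f)) → e ≠ f → c e ≠ c f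

/-- The color class of the color `i`. -/
def colorClass {V : Type*} [Fintype V] [DecidableEq V] (G : SimpleGraph V)
    [DecidableRel G.Adj] {N : ℕ} (c : Sym2 V → Fin N) (i : Fin N) : Finset (Sym2 V) :=
  G.edgeFinset.filter fun e => c e = i

/-- A set of edges forming a triangle. -/
def IsTriangleClass {V : Type*} [DecidableEq V] (S : Finset (Sym2 V)) : Prop :=
  ∃ u v w : V, u ≠ v ∧ u ≠ w ∧ v ≠ w ∧ S = {s(u, v), s(u, w), s(v, w)}

/-- A set of edges forming a star (all edges through a common vertex). -/
def IsStarClass {V : Type*} (S : Finset (Sym2 V)) : Prop :=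
  ∃ v : V, ∀ e ∈ S, v ∈ e

/-- The number of triangle color classes of a coloring. -/
noncomputable def numTriangleClasses {V : Type*} [Fintype V] [DecidableEq V]
    (G : SimpleGraph V) [DecidableRel G.Adj] {N : ℕ} (c : Sym2 V → Fin N) : ℕ :=
  Set.ncard {i : Fin N | IsTriangleClass (colorClass G c i)}
section CircuitHelpers

open Finset

variable {V : Type*}

private lemma walk_support_getElem {G : SimpleGraph V} {a b : V} (p : G.Walk a b) :
    ∀ i (h : i < p.support.length), p.support[i] = p.getVert i := by
  induction p with
  | nil => intro i h; simp [SimpleGraph.Walk.support_nil] at h; subst h; rfl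
  | cons hadj q ih =>
    intro i h
    cases i with
    | zero => simp [SimpleGraph.Walk.support_cons, SimpleGraph.Walk.getVert_zero]
    | succ n =>
      simp only [SimpleGraph.Walk.support_cons, List.getElem_cons_succ,
        SimpleGraph.Walk.getVert_cons_succ]
      apply ih

private lemma walk_mem_edges_iff {G : SimpleGraph V} {a b : V} (p : G.Walk a b) (f : Sym2 V) :
    f ∈ p.edges ↔ ∃ m, m < p.length ∧ f = s(p.getVert m, p.getVert (m + 1)) := by
  induction p with
  | nil => simp
  | cons hadj q ih =>
    rw [SimpleGraph.Walk.edges_cons, List.mem_cons, ih]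
    constructor
    · rintro (rfl | ⟨m, hm, rfl⟩)
      · exact ⟨0, by simp [SimpleGraph.Walk.length_cons], by
          simp [SimpleGraph.Walk.getVert_zero, SimpleGraph.Walk.getVert_cons_succ]⟩
      · exact ⟨m + 1, by simp [SimpleGraph.Walk.length_cons]; omega, by
          simp [SimpleGraph.Walk.getVert_cons_succ]⟩
    · rintro ⟨m, hm, rfl⟩
      cases m with
      | zero => left; simp [SimpleGraph.Walk.getVert_zero, SimpleGraph.Walk.getVert_cons_succ]
      | succ n =>
        right
        refine ⟨n, by simp [SimpleGraph.Walk.length_cons] at hm; omega, by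
          simp [SimpleGraph.Walk.getVert_cons_succ]⟩

private lemma cycle_getVert_inj {G : SimpleGraph V} {u : V} {p : G.Walk u u} (hp : p.IsCycle)
    {i j : ℕ} (hi : i < p.length) (hj : j < p.length)
    (h : p.getVert i = p.getVert j) : i = j := by
  have hnd : p.support.tail.Nodup := hp.support_nodup
  have hlen : p.support.length = p.length + 1 := p.length_support
  have htl : p.support.tail.length = p.length := by
    rw [List.length_tail, hlen]; omega
  have hget : ∀ m (hm : 1 ≤ m) (hm' : m ≤ p.length), p.getVert m
      = p.support.tail[m-1]'(by omega) := by
    intro m hm hm'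
    have : p.support.tail[m-1]'(by omega) = p.support[m]'(by omega) := by
      rw [List.getElem_tail]; congr 1; omega
    rw [this, walk_support_getElem]
  have key : ∀ m n (hm1 : 1 ≤ m) (hm2 : m ≤ p.length) (hn1 : 1 ≤ n) (hn2 : n ≤ p.length),
      p.getVert m = p.getVert n → m = n := by
    intro m n hm1 hm2 hn1 hn2 hmn
    rw [hget m hm1 hm2, hget n hn1 hn2] at hmn
    have := (List.Nodup.getElem_inj_iff hnd).mp hmn
    omega
  rcases Nat.eq_zero_or_pos i with rfl | hi1
  · rcases Nat.eq_zero_or_pos j with rfl | hj1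
    · rfl
    · exfalso
      have h0 : p.getVert 0 = p.getVert p.length := by
        rw [p.getVert_zero, p.getVert_length]
      rw [h0] at h
      have := key p.length j (by omega) le_rfl (by omega) (by omega) h
      omega
  · rcases Nat.eq_zero_or_pos j with rfl | hj1
    · exfalso
      have h0 : p.getVert 0 = p.getVert p.length := by
        rw [p.getVert_zero, p.getVert_length]
      rw [h0] at h
      have := key i p.length (by omega) (by omega) (by omega) le_rfl h
      omega
    · exact key i j hi1 (by omega) hj1 (by omega) h

variable [DecidableEq V]

private lemma sym2_decomp (f : Sym2 V) : ∃ a b : V, f = s(a, b) := by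
  induction f using Sym2.inductionOn with
  | hf a b => exact ⟨a, b, rfl⟩

private lemma not_triangle_of_common {S : Finset (Sym2 V)} (x : V)
    (h : ∀ f ∈ S, x ∈ f) : ¬ IsTriangleClass S := by
  rintro ⟨a, b, d, hab, had, hbd, rfl⟩
  have h1 := h s(a,b) (by simp)
  have h2 := h s(a,d) (by simp)
  have h3 := h s(b,d) (by simp)
  rw [Sym2.mem_iff] at h1 h2 h3
  rcases h1 with rfl | rfl
  · rcases h3 with h | h
    · exact hab h
    · exact had h
  · rcases h2 with h | h
    · exact hab h.symm
    · exact hbd h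

private lemma star_or_triangle [Nonempty V] (S : Finset (Sym2 V))
    (hnd : ∀ f ∈ S, ¬ f.IsDiag)
    (hint : ∀ f ∈ S, ∀ g ∈ S, f ≠ g → ∃ x : V, x ∈ f ∧ x ∈ g) :
    IsStarClass S ∨ IsTriangleClass S := by
  by_cases hstar : IsStarClass S
  · exact Or.inl hstar
  right
  unfold IsStarClass at hstar
  push_neg at hstar
  obtain ⟨vv⟩ := ‹Nonempty V›
  obtain ⟨f₀, hf₀S, _⟩ := hstar vv
  obtain ⟨a, b, rfl⟩ := sym2_decomp f₀
  have hab : a ≠ b := by simpa [Sym2.mk_isDiag_iff] using hnd _ hf₀S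
  obtain ⟨f₁, hf₁S, haf₁⟩ := hstar a
  have hbf₁ : b ∈ f₁ := by
    have hne : s(a,b) ≠ f₁ := fun h => haf₁ (h ▸ Sym2.mem_mk_left a b)
    obtain ⟨x, hx1, hx2⟩ := hint _ hf₀S _ hf₁S hne
    rcases Sym2.mem_iff.mp hx1 with rfl | rfl
    · exact absurd hx2 haf₁
    · exact hx2
  have hf₁ : f₁ = s(b, Sym2.Mem.other hbf₁) := (Sym2.other_spec hbf₁).symm
  set cc := Sym2.Mem.other hbf₁ with hcc
  have hca : cc ≠ a := fun h => haf₁ (by rw [hf₁, h]; exact Sym2.mem_mk_right b a)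
  have hcb : cc ≠ b := by
    intro h; apply hnd _ hf₁S; rw [hf₁, h]; exact Sym2.mk_isDiag_iff.mpr rfl
  obtain ⟨f₂, hf₂S, hbf₂⟩ := hstar b
  have haf₂ : a ∈ f₂ := by
    have hne : s(a,b) ≠ f₂ := fun h => hbf₂ (h ▸ Sym2.mem_mk_right a b)
    obtain ⟨x, hx1, hx2⟩ := hint _ hf₀S _ hf₂S hne
    rcases Sym2.mem_iff.mp hx1 with rfl | rfl
    · exact hx2
    · exact absurd hx2 hbf₂
  have hf₂ : f₂ = s(a, Sym2.Mem.other haf₂) := (Sym2.other_spec haf₂).symm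
  set d := Sym2.Mem.other haf₂ with hd
  have hdc : d = cc := by
    have hne : f₁ ≠ f₂ := by
      intro h; rw [h] at hbf₁; exact hbf₂ hbf₁
    obtain ⟨x, hx1, hx2⟩ := hint _ hf₁S _ hf₂S hne
    rw [hf₁, Sym2.mem_iff] at hx1
    rw [hf₂, Sym2.mem_iff] at hx2
    rcases hx1 with h1 | h1 <;> rcases hx2 with h2 | h2
    · exact absurd (h2.symm.trans h1) hab
    · exact absurd (by rw [hf₂]; exact Sym2.mem_iff.mpr (Or.inr (h1.symm.trans h2))) hbf₂
    · exact absurd (h1.symm.trans h2) hca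
    · exact h2.symm.trans h1
  have hf₂' : f₂ = s(a, cc) := by rw [hf₂, hdc]
  refine ⟨a, b, cc, hab, fun h => hca h.symm, fun h => hcb h.symm, ?_⟩
  apply Finset.Subset.antisymm
  · intro g hgS
    simp only [Finset.mem_insert, Finset.mem_singleton]
    by_cases hg0 : g = s(a,b)
    · exact Or.inl hg0
    obtain ⟨x, hx1, hx2⟩ := hint _ hgS _ hf₀S hg0
    rcases Sym2.mem_iff.mp hx2 with hxa | hxb
    · have hx1 : a ∈ g := hxa ▸ hx1
      have hgt : g = s(a, Sym2.Mem.other hx1) := (Sym2.other_spec hx1).symm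
      set t := Sym2.Mem.other hx1 with ht
      have hgne : g ≠ f₁ := fun h => haf₁ (h ▸ hx1)
      obtain ⟨y, hy1, hy2⟩ := hint _ hgS _ hf₁S hgne
      rw [hgt, Sym2.mem_iff] at hy1
      rw [hf₁, Sym2.mem_iff] at hy2
      rcases hy1 with rfl | rfl
      · rcases hy2 with h | h
        · exact absurd h hab
        · exact absurd h.symm hca
      · rcases hy2 with h | h
        · exact absurd (by rw [hgt, h]) hg0
        · right; left; rw [hgt, h]
    · have hx1 : b ∈ g := hxb ▸ hx1
      have hgt : g = s(b, Sym2.Mem.other hx1) := (Sym2.other_spec hx1).symm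
      set t := Sym2.Mem.other hx1 with ht
      have hgne : g ≠ f₂ := fun h => hbf₂ (h ▸ hx1)
      obtain ⟨y, hy1, hy2⟩ := hint _ hgS _ hf₂S hgne
      rw [hgt, Sym2.mem_iff] at hy1
      rw [hf₂', Sym2.mem_iff] at hy2
      rcases hy1 with rfl | rfl
      · rcases hy2 with h | h
        · exact absurd h.symm hab
        · exact absurd h.symm hcb
      · rcases hy2 with h | h
        · exact absurd (by rw [hgt, h, Sym2.eq_swap]) hg0
        · right; right; rw [hgt, h]
  · intro g hg
    simp only [Finset.mem_insert, Finset.mem_singleton] at hg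
    rcases hg with rfl | rfl | rfl
    · exact hf₀S
    · rw [← hf₂']; exact hf₂S
    · rw [← hf₁]; exact hf₁S

private lemma triangle_card {S : Finset (Sym2 V)} (hT : IsTriangleClass S) : S.card = 3 := by
  obtain ⟨a, b, d, hab, had, hbd, rfl⟩ := hT
  have e1 : s(a,b) ≠ s(a,d) := by
    simp [Sym2.eq_iff, hab, hab.symm, had, had.symm, hbd, hbd.symm]
  have e2 : s(a,b) ≠ s(b,d) := by
    simp [Sym2.eq_iff, hab, hab.symm, had, had.symm, hbd, hbd.symm]
  have e3 : s(a,d) ≠ s(b,d) := by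
    simp [Sym2.eq_iff, hab, hab.symm, had, had.symm, hbd, hbd.symm]
  rw [Finset.card_insert_of_notMem (by simp [e1, e2]),
    Finset.card_insert_of_notMem (by simp [e3]), Finset.card_singleton]

private lemma triangle_mem_cases {S : Finset (Sym2 V)} (hT : IsTriangleClass S)
    {a b d : V} (hab : a ≠ b) (had : a ≠ d) (hbd : b ≠ d)
    (h1 : s(a,b) ∈ S) (h2 : s(b,d) ∈ S) :
    ∀ f ∈ S, f = s(a,b) ∨ f = s(b,d) ∨ f = s(a,d) := by
  obtain ⟨u, v, w, huv, huw, hvw, rfl⟩ := hT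
  have hmemV : ∀ f ∈ ({s(u,v), s(u,w), s(v,w)} : Finset (Sym2 V)), ∀ x : V, x ∈ f →
      x ∈ ({u, v, w} : Finset V) := by
    intro f hf x hx
    simp only [Finset.mem_insert, Finset.mem_singleton] at hf
    rcases hf with rfl | rfl | rfl <;>
      rcases Sym2.mem_iff.mp hx with rfl | rfl <;> simp
  have hda : ({a, b, d} : Finset V) ⊆ {u, v, w} := by
    intro x hx
    simp only [Finset.mem_insert, Finset.mem_singleton] at hx
    rcases hx with rfl | rfl | rfl
    · exact hmemV _ h1 _ (Sym2.mem_mk_left _ _)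
    · exact hmemV _ h1 _ (Sym2.mem_mk_right _ _)
    · exact hmemV _ h2 _ (Sym2.mem_mk_right _ _)
  have hcards : ({a, b, d} : Finset V).card = 3 := by
    rw [Finset.card_insert_of_notMem (by simp [hab, had]),
      Finset.card_insert_of_notMem (by simp [hbd]), Finset.card_singleton]
  have hcardt : ({u, v, w} : Finset V).card = 3 := by
    rw [Finset.card_insert_of_notMem (by simp [huv, huw]),
      Finset.card_insert_of_notMem (by simp [hvw]), Finset.card_singleton]
  have heq : ({a, b, d} : Finset V) = {u, v, w} :=
    Finset.eq_of_subset_of_card_le hda (by omega)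
  have hmemabd : ∀ f ∈ ({s(u,v), s(u,w), s(v,w)} : Finset (Sym2 V)), ∀ x : V, x ∈ f →
      x ∈ ({a, b, d} : Finset V) := by
    intro f hf x hx; rw [heq]; exact hmemV f hf x hx
  intro f hf
  have hnd : ∀ g ∈ ({s(u,v), s(u,w), s(v,w)} : Finset (Sym2 V)), ¬ g.IsDiag := by
    intro g hg
    simp only [Finset.mem_insert, Finset.mem_singleton] at hg
    rcases hg with rfl | rfl | rfl <;> simp [Sym2.mk_isDiag_iff, huv, huw, hvw]
  obtain ⟨x, y, rfl⟩ := sym2_decomp f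
  have hxy : x ≠ y := by simpa [Sym2.mk_isDiag_iff] using hnd _ hf
  have hx : x ∈ ({a,b,d} : Finset V) := hmemabd _ hf _ (Sym2.mem_mk_left _ _)
  have hy : y ∈ ({a,b,d} : Finset V) := hmemabd _ hf _ (Sym2.mem_mk_right _ _)
  simp only [Finset.mem_insert, Finset.mem_singleton] at hx hy
  rcases hx with h | h | h <;> rcases hy with h' | h' | h' <;>
    first
      | exact absurd (h.trans h'.symm) hxy
      | (rw [h, h']; simp [Sym2.eq_iff])

end CircuitHelpers

/-- Let `G` satisfy `χ(KG(G)) = cd₂(G)`, and consider an optimal proper coloring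
of `KG(G)` (with `χ(KG(G))` colors) having a minimum number of triangle classes.
Then every circuit of `G` either is one of the triangle classes, or contains an
edge belonging to a star class. -/
theorem circuit_triangle_or_star {V : Type*} [Fintype V] [DecidableEq V]
    (G : SimpleGraph V) [DecidableRel G.Adj]
    (hcd : (KGgraph G).chromaticNumber = ((cd2Graph G : ℕ) : ℕ∞))
    (N : ℕ) (hN : (KGgraph G).chromaticNumber = (N : ℕ∞))
    (c : Sym2 V → Fin N) (hc : ProperKGColoring G c)
    (hmin : ∀ c' : Sym2 V → Fin N, ProperKGColoring G c' →
      numTriangleClasses G c ≤ numTriangleClasses G c') :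
    ∀ (u : V) (p : G.Walk u u), p.IsCycle →
      (∃ i : Fin N, IsTriangleClass (colorClass G c i) ∧
        p.edges.toFinset = colorClass G c i) ∨
      ∃ e ∈ p.edges, IsStarClass (colorClass G c (c e)) := by
  intro u p hp
  classical
  by_cases hstar : ∃ e ∈ p.edges, IsStarClass (colorClass G c (c e))
  · exact Or.inr hstar
  push_neg at hstar
  haveI : Nonempty V := ⟨u⟩
  set k := p.length with hkdef
  have hk3 : 3 ≤ k := hp.three_le_length
  have hk0 : 0 < k := by omega
  set vv : ℕ → V := fun m => p.getVert (m % k) with hvvdef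
  set ee : ℕ → Sym2 V := fun m => s(vv m, vv (m + 1)) with heedef
  have vv_congr : ∀ {m l : ℕ}, m % k = l % k → vv m = vv l := by
    intro m l h; simp only [hvvdef]; rw [h]
  have ee_eq : ∀ m, ee m = s(vv m, vv (m+1)) := fun m => by rw [heedef]
  have ee_congr : ∀ {m l : ℕ}, m % k = l % k → ee m = ee l := by
    intro m l h
    have h1 : (m + 1) % k = (l + 1) % k := Nat.ModEq.add_right 1 h
    rw [ee_eq, ee_eq, vv_congr h, vv_congr h1]
  have ee_add_k : ∀ m, ee (m + k) = ee m := fun m => ee_congr (Nat.add_mod_right m k)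
  have ee_mod : ∀ m, ee (m % k) = ee m :=
    fun m => ee_congr (Nat.mod_mod_of_dvd m dvd_rfl)
  have mem_ee_iff : ∀ (x : V) m, x ∈ ee m ↔ x = vv m ∨ x = vv (m+1) := by
    intro x m; rw [ee_eq, Sym2.mem_iff]
  have vv_mem_ee : ∀ m, vv m ∈ ee m := fun m => (mem_ee_iff _ m).mpr (Or.inl rfl)
  have vv_mem_ee' : ∀ m, vv (m+1) ∈ ee m := fun m => (mem_ee_iff _ m).mpr (Or.inr rfl)
  have adj_vv : ∀ m, G.Adj (vv m) (vv (m + 1)) := by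
    intro m
    simp only [hvvdef]
    have hmlt : m % k < k := Nat.mod_lt _ hk0
    have hmod : (m % k + 1) % k = (m + 1) % k := Nat.mod_add_mod m k 1
    have hadj := p.adj_getVert_succ (show m % k < p.length from hmlt)
    by_cases h2 : m % k + 1 < k
    · rw [← hmod, Nat.mod_eq_of_lt h2]
      exact hadj
    · have hk' : m % k + 1 = k := by omega
      rw [← hmod, hk', Nat.mod_self, p.getVert_zero]
      rw [hk'] at hadj
      have hgk : p.getVert k = u := by rw [hkdef]; exact p.getVert_length
      rw [hgk] at hadj
      exact hadj
  have ee_mem_E : ∀ m, ee m ∈ G.edgeFinset := by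
    intro m
    rw [ee_eq, SimpleGraph.mem_edgeFinset, SimpleGraph.mem_edgeSet]
    exact adj_vv m
  have vv_inj : ∀ m l, vv m = vv l → m % k = l % k := by
    intro m l h
    exact cycle_getVert_inj hp (Nat.mod_lt _ hk0) (Nat.mod_lt _ hk0) h
  have dvd_helper : ∀ (m d : ℕ), (m + d) % k = m % k → k ∣ d := by
    intro m d h
    have h1 : (m + d) % k = (m + 0) % k := by simpa using h
    exact Nat.modEq_zero_iff_dvd.mp (Nat.ModEq.add_left_cancel' m h1)
  have vv_ne : ∀ (m d : ℕ), 0 < d → d < k → vv m ≠ vv (m + d) := by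
    intro m d hd0 hdk h
    have h1 := vv_inj _ _ h
    have h2 := dvd_helper m d h1.symm
    have := Nat.le_of_dvd hd0 h2
    omega
  have ee_inj : ∀ m l, ee m = ee l → m % k = l % k := by
    intro m l h
    rw [ee_eq, ee_eq] at h
    rcases Sym2.eq_iff.mp h with ⟨h1, h2⟩ | ⟨h1, h2⟩
    · exact vv_inj _ _ h1
    · exfalso
      have ha := vv_inj _ _ h1
      have hb := vv_inj _ _ h2
      have hc2 : (m + 2) % k = (l + 1) % k := by
        have := Nat.ModEq.add_right 1 hb
        exact this
      have : (m + 2) % k = m % k := hc2.trans ha.symm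
      have := Nat.le_of_dvd (by norm_num) (dvd_helper m 2 this)
      omega
  have ee_eq_getVert : ∀ l, l < k → ee l = s(p.getVert l, p.getVert (l+1)) := by
    intro l hl
    rw [ee_eq]
    have hv0 : vv l = p.getVert l := by
      simp only [hvvdef]; rw [Nat.mod_eq_of_lt hl]
    by_cases h2 : l + 1 < k
    · have hv1 : vv (l+1) = p.getVert (l+1) := by
        simp only [hvvdef]; rw [Nat.mod_eq_of_lt h2]
      rw [hv0, hv1]
    · have hk' : l + 1 = k := by omega
      have hv1 : vv (l+1) = p.getVert (l+1) := by
        simp only [hvvdef]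
        rw [hk', Nat.mod_self, p.getVert_zero, hkdef, p.getVert_length]
      rw [hv0, hv1]
  have mem_edges_ee : ∀ f, f ∈ p.edges ↔ ∃ l, l < k ∧ f = ee l := by
    intro f
    rw [walk_mem_edges_iff]
    constructor
    · rintro ⟨m, hm, rfl⟩
      exact ⟨m, hm, (ee_eq_getVert m hm).symm⟩
    · rintro ⟨l, hl, rfl⟩
      exact ⟨l, hl, ee_eq_getVert l hl⟩
  have ee_mem_p : ∀ m, ee m ∈ p.edges := by
    intro m
    rw [mem_edges_ee]
    exact ⟨m % k, Nat.mod_lt _ hk0, (ee_mod m).symm⟩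
  have share : ∀ f g, f ∈ G.edgeFinset → g ∈ G.edgeFinset → c f = c g → f ≠ g →
      ∃ x, x ∈ f ∧ x ∈ g := by
    intro f g hf hg hcfg hne
    by_contra h
    push_neg at h
    exact hc f hf g hg (fun x hx => h x hx.1 hx.2) hne hcfg
  have H1 : ∀ f ∈ p.edges, IsTriangleClass (colorClass G c (c f)) := by
    intro f hf
    have hf' : f ∈ G.edgeFinset := SimpleGraph.mem_edgeFinset.mpr (p.edges_subset_edgeSet hf)
    have hnd : ∀ g ∈ colorClass G c (c f), ¬ g.IsDiag := by
      intro g hg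
      simp only [colorClass, Finset.mem_filter] at hg
      exact G.not_isDiag_of_mem_edgeSet (SimpleGraph.mem_edgeFinset.mp hg.1)
    have hint : ∀ g₁ ∈ colorClass G c (c f), ∀ g₂ ∈ colorClass G c (c f), g₁ ≠ g₂ →
        ∃ x : V, x ∈ g₁ ∧ x ∈ g₂ := by
      intro g₁ hg₁ g₂ hg₂ hne
      simp only [colorClass, Finset.mem_filter] at hg₁ hg₂
      exact share g₁ g₂ hg₁.1 hg₂.1 (hg₁.2.trans hg₂.2.symm) hne
    rcases star_or_triangle _ hnd hint with hs | ht
    · exact absurd hs (hstar f hf)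
    · exact ht
  have H1' : ∀ m, IsTriangleClass (colorClass G c (c (ee m))) := fun m => H1 _ (ee_mem_p m)
  by_cases hall : ∀ f ∈ p.edges, c f = c (ee 0)
  · refine Or.inl ⟨c (ee 0), H1' 0, ?_⟩
    have hsub : p.edges.toFinset ⊆ colorClass G c (c (ee 0)) := by
      intro f hf
      rw [List.mem_toFinset] at hf
      simp only [colorClass, Finset.mem_filter]
      exact ⟨SimpleGraph.mem_edgeFinset.mpr (p.edges_subset_edgeSet hf), hall f hf⟩
    have hcard3 : (colorClass G c (c (ee 0))).card = 3 := triangle_card (H1' 0)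
    have hlenk : p.edges.toFinset.card = k := by
      rw [List.toFinset_card_of_nodup hp.edges_nodup, p.length_edges]
    exact Finset.eq_of_subset_of_card_le hsub (by omega)
  exfalso
  push_neg at hall
  obtain ⟨f0, hf0p, hf0ne⟩ := hall
  obtain ⟨l0, hl0, rfl⟩ := (mem_edges_ee f0).mp hf0p
  -- hf0ne : c (ee l0) ≠ c (ee 0)
  have L8 : ∀ m, c (ee m) = c (ee (m+1)) → c (ee (m+1)) = c (ee (m+2)) → False := by
    intro m h1 h2
    have h02 : c (ee m) = c (ee (m+2)) := h1.trans h2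
    have hne : ee m ≠ ee (m+2) := by
      intro h
      have := Nat.le_of_dvd (by norm_num) (dvd_helper m 2 (ee_inj _ _ h).symm)
      omega
    obtain ⟨x, hx1, hx2⟩ := share _ _ (ee_mem_E m) (ee_mem_E (m+2)) h02 hne
    rw [mem_ee_iff] at hx1 hx2
    have hk3' : k = 3 := by
      rcases hx1 with rfl | rfl <;> rcases hx2 with h | h
      · exfalso
        have := Nat.le_of_dvd (by norm_num) (dvd_helper m 2 (vv_inj _ _ h).symm)
        omega
      · -- vv m = vv (m+2+1)
        have h3 : (m + 3) % k = m % k := by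
          have := (vv_inj _ _ h).symm
          simpa [Nat.add_assoc] using this
        have := Nat.le_of_dvd (by norm_num) (dvd_helper m 3 h3)
        omega
      · exfalso
        have h1' : (m + 1 + 1) % k = (m+1) % k := by
          have := (vv_inj _ _ h).symm
          simpa [Nat.add_assoc] using this
        have := Nat.le_of_dvd (by norm_num) (dvd_helper (m+1) 1 h1')
        omega
      · exfalso
        have h2' : (m + 1 + 2) % k = (m+1) % k := by
          have := (vv_inj _ _ h).symm
          simpa [Nat.add_assoc] using this
        have := Nat.le_of_dvd (by norm_num) (dvd_helper (m+1) 2 h2')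
        omega
    have per : ∀ j, c (ee (m + j)) = c (ee m) := by
      intro j
      have hcong : ee (m + j) = ee (m + j % 3) := ee_congr (by rw [hk3']; omega)
      have hj : j % 3 = 0 ∨ j % 3 = 1 ∨ j % 3 = 2 := by omega
      rcases hj with hj | hj | hj <;> rw [hcong, hj]
      · rfl
      · exact h1.symm
      · exact h02.symm
    have hall2 : ∀ l, c (ee l) = c (ee m) := by
      intro l
      have : ee l = ee (m + (l + 2 * m)) := ee_congr (by rw [hk3']; omega)
      rw [this, per]
    exact hf0ne ((hall2 l0).trans (hall2 0).symm)
  set start : ℕ → Prop := fun m => c (ee m) ≠ c (ee (m + (k - 1))) with hstartdef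
  have start_succ : ∀ m, start (m+1) ↔ c (ee (m+1)) ≠ c (ee m) := by
    intro m
    simp only [hstartdef]
    have h1 : m + 1 + (k - 1) = m + k := by omega
    rw [h1, ee_add_k]
  have L10 : ∀ l, ∃ m, start m ∧ c (ee m) = c (ee l) := by
    intro l
    by_cases h1 : start l
    · exact ⟨l, h1, rfl⟩
    · simp only [hstartdef, not_not] at h1
      by_cases h2 : start (l + (k-1))
      · exact ⟨l + (k-1), h2, h1.symm⟩
      · exfalso
        simp only [hstartdef, not_not] at h2
        have e1 : ee (l + (k-1) + (k-1) + 1) = ee (l + (k-1)) := by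
          have h3 : l + (k-1) + (k-1) + 1 = (l + (k-1)) + k := by omega
          rw [h3, ee_add_k]
        have e2 : ee (l + (k-1) + (k-1) + 2) = ee l := by
          have h3 : l + (k-1) + (k-1) + 2 = (l + k) + k := by omega
          rw [h3, ee_add_k, ee_add_k]
        apply L8 (l + (k-1) + (k-1))
        · rw [e1]; exact h2.symm
        · rw [e1, e2]; exact h1.symm
  have L9 : ∀ m l, start m → start l → c (ee m) = c (ee l) → m % k = l % k := by
    intro m l hm hl hcl
    by_contra hne'
    have hne : ee m ≠ ee l := fun h => hne' (ee_inj _ _ h)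
    obtain ⟨x, hx1, hx2⟩ := share _ _ (ee_mem_E m) (ee_mem_E l) hcl hne
    rw [mem_ee_iff] at hx1 hx2
    rcases hx1 with rfl | rfl <;> rcases hx2 with h | h
    · exact hne' (vv_inj _ _ h)
    · -- vv m = vv (l+1)
      have hml : m % k = (l + 1) % k := vv_inj _ _ h
      have hcong : ee (m + (k-1)) = ee l := by
        apply ee_congr
        have h1 : (m + (k-1)) % k = (l + 1 + (k-1)) % k := Nat.ModEq.add_right _ hml
        have h2 : l + 1 + (k-1) = l + k := by omega
        rw [h2, Nat.add_mod_right] at h1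
        exact h1
      apply hm
      rw [hcong]
      exact hcl
    · -- vv (m+1) = vv l
      have hml : (m + 1) % k = l % k := vv_inj _ _ h
      have hcong : ee (l + (k-1)) = ee m := by
        apply ee_congr
        have h1 : (l + (k-1)) % k = (m + 1 + (k-1)) % k := Nat.ModEq.add_right _ hml.symm
        have h2 : m + 1 + (k-1) = m + k := by omega
        rw [h2, Nat.add_mod_right] at h1
        exact h1
      apply hl
      rw [hcong]
      exact hcl.symm
    · exact hne' (Nat.ModEq.add_right_cancel' 1 (vv_inj _ _ h))
  have exMc : ∀ {f : Sym2 V}, (∃ l, l < k ∧ c f = c (ee l)) →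
      ∃ m, start m ∧ c (ee m) = c f := by
    rintro f ⟨l, -, hl⟩
    obtain ⟨m, hm1, hm2⟩ := L10 l
    exact ⟨m, hm1, hm2.trans hl.symm⟩
  set σ : Fin N → ℕ := fun i => if h : ∃ m, start m ∧ c (ee m) = i then h.choose else 0
    with hσdef
  have σ_spec : ∀ {i : Fin N}, (∃ m, start m ∧ c (ee m) = i) →
      start (σ i) ∧ c (ee (σ i)) = i := by
    intro i h
    simp only [hσdef, dif_pos h]
    exact h.choose_spec
  set nxt : ℕ → ℕ := fun m => if c (ee (m+1)) = c (ee m) then m + 2 else m + 1 with hnxtdef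
  have start_nxt : ∀ m, start m → start (nxt m) := by
    intro m hm
    simp only [hnxtdef]
    by_cases h : c (ee (m+1)) = c (ee m)
    · rw [if_pos h]
      have hss := start_succ (m+1)
      have h12 : m + 1 + 1 = m + 2 := rfl
      rw [h12] at hss
      rw [hss]
      intro h2
      exact L8 m h.symm h2.symm
    · rw [if_neg h, start_succ]
      exact h
  set c' : Sym2 V → Fin N := fun f =>
    if h : f ∈ G.edgeFinset ∧ ∃ l, l < k ∧ c f = c (ee l) then
      (if vv (σ (c f)) ∈ f then c f else c (ee (nxt (σ (c f)))))
    else c f with hc'def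
  have key : ∀ f, f ∈ G.edgeFinset → (∃ l, l < k ∧ c f = c (ee l)) →
      ∃ m, start m ∧ c (ee m) = c' f ∧ vv m ∈ f := by
    intro f hf hQ
    obtain ⟨hs0, hs1⟩ := σ_spec (exMc hQ)
    have hdef : c' f = if vv (σ (c f)) ∈ f then c f else c (ee (nxt (σ (c f)))) := by
      simp only [hc'def]
      rw [dif_pos ⟨hf, hQ⟩]
    by_cases hv : vv (σ (c f)) ∈ f
    · rw [hdef, if_pos hv]
      exact ⟨σ (c f), hs0, hs1, hv⟩
    · rw [hdef, if_neg hv]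
      obtain ⟨m0, hm0⟩ : ∃ m0, σ (c f) = m0 := ⟨_, rfl⟩
      rw [hm0] at hv hs0 hs1 ⊢
      have hne : f ≠ ee m0 := by
        intro h
        apply hv
        rw [h]
        exact vv_mem_ee m0
      obtain ⟨x, hx1, hx2⟩ := share f (ee m0) hf (ee_mem_E _) hs1.symm hne
      rw [mem_ee_iff] at hx2
      have hvm1 : vv (m0 + 1) ∈ f := by
        rcases hx2 with rfl | rfl
        · exact absurd hx1 hv
        · exact hx1
      by_cases hrun : c (ee (m0 + 1)) = c (ee m0)
      · -- run of length 2 : f must be ee (m0 + 1)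
        have hnxt : nxt m0 = m0 + 2 := by
          simp only [hnxtdef]; rw [if_pos hrun]
        have hT : IsTriangleClass (colorClass G c (c (ee m0))) := H1' _
        have d01 : vv m0 ≠ vv (m0 + 1) := vv_ne _ 1 one_pos (by omega)
        have d02 : vv m0 ≠ vv (m0 + 2) := vv_ne _ 2 (by norm_num) (by omega)
        have d12 : vv (m0 + 1) ≠ vv (m0 + 2) := by
          have := vv_ne (m0 + 1) 1 one_pos (by omega)
          simpa [Nat.add_assoc] using this
        have hm1 : s(vv m0, vv (m0 + 1)) ∈ colorClass G c (c (ee m0)) := by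
          rw [← ee_eq]
          exact Finset.mem_filter.mpr ⟨ee_mem_E _, rfl⟩
        have hm2 : s(vv (m0 + 1), vv (m0 + 2)) ∈ colorClass G c (c (ee m0)) := by
          have h12 : (m0 + 1) + 1 = m0 + 2 := rfl
          rw [← h12, ← ee_eq]
          exact Finset.mem_filter.mpr ⟨ee_mem_E _, hrun⟩
        have hfS : f ∈ colorClass G c (c (ee m0)) :=
          Finset.mem_filter.mpr ⟨hf, hs1.symm⟩
        rcases triangle_mem_cases hT d01 d02 d12 hm1 hm2 f hfS with h | h | h
        · exfalso
          rw [← ee_eq] at h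
          exact hne h
        · -- f = ee (m0 + 1)
          refine ⟨m0 + 2, ?_, ?_, ?_⟩
          · rw [← hnxt]; exact start_nxt _ hs0
          · rw [← hnxt]
          · rw [h]; exact Sym2.mem_mk_right _ _
        · exfalso
          apply hv
          rw [h]
          exact Sym2.mem_mk_left _ _
      · -- run of length 1
        have hnxt : nxt m0 = m0 + 1 := by
          simp only [hnxtdef]; rw [if_neg hrun]
        refine ⟨m0 + 1, ?_, ?_, ?_⟩
        · rw [← hnxt]; exact start_nxt _ hs0
        · rw [← hnxt]
        · exact hvm1
  have hprop' : ProperKGColoring G c' := by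
    intro f hf g hg hdisj hne hEq
    by_cases hQf : ∃ l, l < k ∧ c f = c (ee l) <;>
      by_cases hQg : ∃ l, l < k ∧ c g = c (ee l)
    · obtain ⟨m1, hm10, hm11, hm12⟩ := key f hf hQf
      obtain ⟨m2, hm20, hm21, hm22⟩ := key g hg hQg
      have hmm : m1 % k = m2 % k := L9 _ _ hm10 hm20 (by rw [hm11, hm21, hEq])
      exact hdisj (vv m1) ⟨hm12, by rw [vv_congr hmm]; exact hm22⟩
    · have hg' : c' g = c g := by
        simp only [hc'def]; rw [dif_neg]; rintro ⟨-, h⟩; exact hQg h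
      obtain ⟨m1, hm10, hm11, hm12⟩ := key f hf hQf
      apply hQg
      refine ⟨m1 % k, Nat.mod_lt _ hk0, ?_⟩
      rw [ee_mod, ← hg', ← hEq, ← hm11]
    · have hf' : c' f = c f := by
        simp only [hc'def]; rw [dif_neg]; rintro ⟨-, h⟩; exact hQf h
      obtain ⟨m2, hm20, hm21, hm22⟩ := key g hg hQg
      apply hQf
      refine ⟨m2 % k, Nat.mod_lt _ hk0, ?_⟩
      rw [ee_mod, ← hf', hEq, ← hm21]
    · have hf' : c' f = c f := by
        simp only [hc'def]; rw [dif_neg]; rintro ⟨-, h⟩; exact hQf h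
      have hg' : c' g = c g := by
        simp only [hc'def]; rw [dif_neg]; rintro ⟨-, h⟩; exact hQg h
      exact hc f hf g hg hdisj hne (by rw [← hf', ← hg', hEq])
  have keyClass : ∀ (i : Fin N), (∃ l, l < k ∧ i = c (ee l)) →
      ∀ f ∈ colorClass G c' i, vv (σ i) ∈ f := by
    intro i hi f hf
    simp only [colorClass, Finset.mem_filter] at hf
    obtain ⟨hfE, hfc⟩ := hf
    by_cases hQ : ∃ l, l < k ∧ c f = c (ee l)
    · obtain ⟨m, hm0, hm1, hm2⟩ := key f hfE hQ
      have hmi : c (ee m) = i := hm1.trans hfc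
      obtain ⟨hs0, hs1⟩ := σ_spec (i := i) ⟨m, hm0, hmi⟩
      have hmm := L9 m (σ i) hm0 hs0 (by rw [hmi, hs1])
      rw [← vv_congr hmm]
      exact hm2
    · exfalso
      have hcf : c' f = c f := by
        simp only [hc'def]; rw [dif_neg]; rintro ⟨-, h⟩; exact hQ h
      obtain ⟨l, hl1, hl2⟩ := hi
      exact hQ ⟨l, hl1, by rw [← hcf, hfc, hl2]⟩
  have classEq : ∀ (i : Fin N), ¬(∃ l, l < k ∧ i = c (ee l)) →
      colorClass G c' i = colorClass G c i := by
    intro i hi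
    apply Finset.ext
    intro f
    simp only [colorClass, Finset.mem_filter]
    constructor
    · rintro ⟨hfE, hfc⟩
      refine ⟨hfE, ?_⟩
      by_cases hQ : ∃ l, l < k ∧ c f = c (ee l)
      · exfalso
        obtain ⟨m, hm0, hm1, hm2⟩ := key f hfE hQ
        refine hi ⟨m % k, Nat.mod_lt _ hk0, ?_⟩
        rw [ee_mod, ← hfc, ← hm1]
      · have hcf : c' f = c f := by
          simp only [hc'def]; rw [dif_neg]; rintro ⟨-, h⟩; exact hQ h
        rw [← hcf]; exact hfc
    · rintro ⟨hfE, hfc⟩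
      refine ⟨hfE, ?_⟩
      by_cases hQ : ∃ l, l < k ∧ c f = c (ee l)
      · exfalso
        obtain ⟨l, hl1, hl2⟩ := hQ
        exact hi ⟨l, hl1, by rw [← hfc, hl2]⟩
      · have hcf : c' f = c f := by
          simp only [hc'def]; rw [dif_neg]; rintro ⟨-, h⟩; exact hQ h
        rw [hcf]; exact hfc
  have hnotTri' : ∀ (i : Fin N), (∃ l, l < k ∧ i = c (ee l)) →
      ¬ IsTriangleClass (colorClass G c' i) :=
    fun i hi => not_triangle_of_common (vv (σ i)) (keyClass i hi)
  have hsubset : {i : Fin N | IsTriangleClass (colorClass G c' i)} ⊆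
      {i : Fin N | IsTriangleClass (colorClass G c i)} := by
    intro i hi
    by_cases h : ∃ l, l < k ∧ i = c (ee l)
    · exact absurd hi (hnotTri' i h)
    · rw [Set.mem_setOf_eq, classEq i h] at hi
      exact hi
  have hmem0 : c (ee 0) ∈ {i : Fin N | IsTriangleClass (colorClass G c i)} := H1' 0
  have hnmem0 : c (ee 0) ∉ {i : Fin N | IsTriangleClass (colorClass G c' i)} :=
    hnotTri' _ ⟨0, hk0, rfl⟩
  have hlt : numTriangleClasses G c' < numTriangleClasses G c := by
    simp only [numTriangleClasses]
    apply Set.ncard_lt_ncard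
    · exact ⟨hsubset, fun habs => hnmem0 (habs hmem0)⟩
    · exact Set.toFinite _
  exact absurd (hmin c' hprop') (by omega)
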